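/- Set β = 1 and let (𝔊_w)_{w ∈ S_∞} be a Grothendieck family for β = 1. Then for every w ∈ S_∞ and every i ≥ 1: if i ∉ Des(w) then T_i 𝔊_w = 0 (hence Ĥ^L_i 𝔊_w = Ĥ^R_i 𝔊_w = 0), and if i ∈ Des(w) then Ĥ^L_i 𝔊_w = R_i 𝔊_w + R_i 𝔊_{w s_i} and Ĥ^R_i 𝔊_w = R_{i+1} 𝔊_w + R_{i+1} 𝔊_{w s_i}. -/

import Mathlib

open MvPolynomial

/-- The ambient ring `R = ℤ[x₁, x₂, …]`, with variables indexed by positive integers. -/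
abbrev MyR : Type := MvPolynomial ℕ+ ℤ

/-- The Bergeron–Sottile operator `R_i`: the `ℤ`-algebra map with
`x_j ↦ x_j` for `j < i`, `x_i ↦ 0`, and `x_j ↦ x_{j-1}` for `j > i`. -/
noncomputable def BS (i : ℕ+) : MyR →ₐ[ℤ] MyR :=
  aeval fun j : ℕ+ =>
    if j < i then (X j : MyR) else if j = i then 0 else X (j - 1)

/-- Plane binary trees. -/
inductive BTree : Type
  | leaf : BTree
  | node : BTree → BTree → BTree
  deriving DecidableEq

namespace BTree

def numLeaves : BTree → ℕ+
  | leaf => 1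
  | node l r => l.numLeaves + r.numLeaves

/-- Number of internal nodes. -/
def size : BTree → ℕ
  | leaf => 0
  | node l r => l.size + r.size + 1

/-- `qdesSet T a` : the QDes positions contributed by a tree `T` whose leftmost
leaf carries the label `a` (leaves are labeled consecutively left-to-right). -/
def qdesSet : BTree → ℕ+ → Set ℕ+
  | leaf, _ => ∅
  | node leaf leaf, a => {a}
  | node l r, a => l.qdesSet a ∪ r.qdesSet (a + l.numLeaves)

/-- `trim T a i` : replace the terminal node whose leaf-children are labeled
`i`, `i+1` by a single leaf (`a` = label of the leftmost leaf of `T`). -/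
def trim : BTree → ℕ+ → ℕ+ → BTree
  | leaf, _, _ => leaf
  | node l r, a, i =>
    if l = leaf ∧ r = leaf ∧ a = i then leaf
    else node (l.trim a i) (r.trim (a + l.numLeaves) i)

/-- `rightAt T a i = true` iff the terminal node of `T` whose leaf-children are
labeled `i`, `i+1` is the right child of its parent. -/
def rightAt : BTree → ℕ+ → ℕ+ → Bool
  | leaf, _, _ => false
  | node l r, a, i =>
    l.rightAt a i || r.rightAt (a + l.numLeaves) i ||
      (decide (r = node leaf leaf) && decide (a + l.numLeaves = i))

end BTree

/-- An indexed forest: a sequence of plane binary trees, all but finitely many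
of which are the single leaf. -/
structure IndexedForest : Type where
  trees : ℕ → BTree
  finite : {n : ℕ | trees n ≠ BTree.leaf}.Finite

namespace IndexedForest

noncomputable def supp (F : IndexedForest) : Finset ℕ := F.finite.toFinset

/-- `|F|`, the number of internal nodes of `F`. -/
noncomputable def size (F : IndexedForest) : ℕ := ∑ n ∈ F.supp, (F.trees n).size

/-- The label of the leftmost leaf of the `n`-th tree (trees indexed from `0`;
leaves are labeled `1, 2, 3, …` from left to right across the trees). -/
def firstLeaf (F : IndexedForest) (n : ℕ) : ℕ+ :=
  ⟨1 + ∑ m ∈ Finset.range n, ((F.trees m).numLeaves : ℕ), by omega⟩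

/-- `QDes(F)`. -/
def qdes (F : IndexedForest) : Set ℕ+ :=
  ⋃ n : ℕ, (F.trees n).qdesSet (F.firstLeaf n)

/-- `F/i`, the forest obtained by replacing the terminal node with leaf-children
`i`, `i+1` by a single leaf. -/
def trim (F : IndexedForest) (i : ℕ+) : IndexedForest where
  trees := fun n => (F.trees n).trim (F.firstLeaf n) i
  finite := F.finite.subset (fun n hn => by
    simp only [Set.mem_setOf_eq] at hn ⊢
    intro h
    apply hn
    rw [h]
    rfl)

/-- The empty forest `∅`. -/
protected def empty : IndexedForest :=
  ⟨fun _ => BTree.leaf, Set.finite_empty.subset (fun _ hn => (hn rfl).elim)⟩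

/-- The terminal node of `F` at `i ∈ QDes F` is a right child. -/
def rightAt (F : IndexedForest) (i : ℕ+) : Prop :=
  ∃ n : ℕ, (F.trees n).rightAt (F.firstLeaf n) i = true

open Classical in
/-- `min QDes(F)` (defaulting to `1` if `QDes(F)` is empty, i.e. `F = ∅`). -/
noncomputable def minQDes (F : IndexedForest) : ℕ+ :=
  if h : ((fun i : ℕ+ => (i : ℕ)) '' F.qdes).Nonempty then
    ⟨sInf ((fun i : ℕ+ => (i : ℕ)) '' F.qdes), by
      obtain ⟨i, _, hieq⟩ := Nat.sInf_mem h
      exact hieq ▸ i.2⟩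
  else 1

end IndexedForest

/-- Set-valued labeled plane binary trees: each internal node carries a finite
set of positive integers. -/
inductive LTree : Type
  | leaf : LTree
  | node : Finset ℕ+ → LTree → LTree → LTree

namespace LTree

/-- Underlying unlabeled tree. -/
def shape : LTree → BTree
  | leaf => BTree.leaf
  | node _ l r => BTree.node l.shape r.shape

/-- The label set of the top of a subtree; a leaf with label `a` counts as the
singleton `{a}`. -/
def headSet : LTree → ℕ+ → Finset ℕ+
  | leaf, a => {a}
  | node S _ _, _ => S

/-- Compatibility of a set-valued labeling: every label set is nonempty,
`max κ(v) ≤ min κ(v_L)` and `max κ(v) < min κ(v_R)`.  The parameter `a` is the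
label of the leftmost leaf of the subtree. -/
def Compatible : LTree → ℕ+ → Prop
  | leaf, _ => True
  | node S l r, a =>
    S.Nonempty ∧ l.Compatible a ∧ r.Compatible (a + l.shape.numLeaves) ∧
    (∀ s ∈ S, ∀ t ∈ l.headSet a, s ≤ t) ∧
    (∀ s ∈ S, ∀ t ∈ r.headSet (a + l.shape.numLeaves), s < t)

/-- The monomial `x_κ` contributed by a labeled tree. -/
noncomputable def weight : LTree → MyR
  | leaf => 1
  | node S l r => (∏ j ∈ S, (X j : MyR)) * l.weight * r.weight

/-- `|κ|`, the total cardinality of the label sets. -/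
def lsize : LTree → ℕ
  | leaf => 0
  | node S l r => S.card + l.lsize + r.lsize

/-- All label sets are singletons. -/
def allSingle : LTree → Prop
  | leaf => True
  | node S l r => S.card = 1 ∧ l.allSingle ∧ r.allSingle

end LTree

/-- The type of compatible set-valued labelings of the indexed forest `F`. -/
def IndexedForest.Labelings (F : IndexedForest) : Type :=
  {κ : ℕ → LTree //
    (∀ n, (κ n).shape = F.trees n) ∧ ∀ n, (κ n).Compatible (F.firstLeaf n)}

/-- The grove polynomial `G_F^{(β)} = Σ_κ β^{|κ|-|F|} x_κ`. -/
noncomputable def groveP (β : ℤ) (F : IndexedForest) : MyR :=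
  ∑ᶠ κ : F.Labelings,
    C (β ^ ((∑ n ∈ F.supp, (κ.1 n).lsize) - F.size)) * ∏ n ∈ F.supp, (κ.1 n).weight

/-- The forest polynomial `𝔓_F`: the sum of `x_κ` over compatible set-valued
labelings all of whose label sets are singletons. -/
noncomputable def forestPoly (F : IndexedForest) : MyR :=
  ∑ᶠ κ : {κ : F.Labelings // ∀ n, (κ.1 n).allSingle},
    ∏ n ∈ F.supp, (κ.1.1 n).weight

open Classical in
/-- Fuel-indexed recursion implementing the grove extractor. -/
noncomputable def extractAux (T : ℕ+ → MyR → MyR) (β : ℤ) :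
    ℕ → IndexedForest → MyR → MyR
  | 0, _, f => f
  | k + 1, F, f =>
    if F = IndexedForest.empty then f
    else
      extractAux T β k (F.trim F.minQDes)
        (if F.rightAt F.minQDes then (1 + C β * X F.minQDes) * T F.minQDes f
         else T F.minQDes f)

/-- The grove extractor `Ĥ_F`: `Ĥ_∅ = id`, and for `F ≠ ∅` and `i = min QDes F`,
`Ĥ_F = Ĥ_{F/i} ∘ Ĥ^R_i` if the terminal node at `i` is a right child and
`Ĥ_F = Ĥ_{F/i} ∘ Ĥ^L_i` otherwise, where `Ĥ^L_i = T_i` and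
`Ĥ^R_i = (1 + βx_i)·T_i`.  (The recursion is implemented with fuel `|F|`, using
that `|F/i| = |F| - 1`.) -/
noncomputable def extract (T : ℕ+ → MyR → MyR) (β : ℤ) (F : IndexedForest) :
    MyR → MyR :=
  extractAux T β F.size F

/-- `S_∞`: permutations of `{1, 2, …}` fixing all but finitely many points. -/
def SPerm : Type := {w : Equiv.Perm ℕ+ // {x : ℕ+ | w x ≠ x}.Finite}

namespace SPerm

/-- The identity permutation. -/
protected def one : SPerm :=
  ⟨1, Set.finite_empty.subset (fun _ hx => (hx rfl).elim)⟩

/-- `w * s_i` where `s_i` is the transposition of `i` and `i+1`. -/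
noncomputable def mulSwap (w : SPerm) (i : ℕ+) : SPerm :=
  ⟨w.1 * Equiv.swap i (i + 1), by
    apply ((w.2.union (Set.finite_singleton i)).union
      (Set.finite_singleton (i + 1))).subset
    intro x hx
    simp only [Set.mem_setOf_eq, Equiv.Perm.mul_apply] at hx
    simp only [Set.mem_union, Set.mem_setOf_eq, Set.mem_singleton_iff]
    by_cases h1 : x = i
    · exact Or.inl (Or.inr h1)
    by_cases h2 : x = i + 1
    · exact Or.inr h2
    · exact Or.inl (Or.inl (by rwa [Equiv.swap_apply_of_ne_of_ne h1 h2] at hx))⟩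

/-- `ℓ(w)`, the number of inversions. -/
noncomputable def len (w : SPerm) : ℕ :=
  Set.ncard {p : ℕ+ × ℕ+ | p.1 < p.2 ∧ w.1 p.2 < w.1 p.1}

/-- `Des(w) = {i ≥ 1 : w(i) > w(i+1)}`. -/
def des (w : SPerm) : Set ℕ+ := {i : ℕ+ | w.1 (i + 1) < w.1 i}

end SPerm

/-- `f` is quasisymmetric in `x₁, …, xₙ`: no variable `x_j` with `j > n`
occurs, and coefficients of monomials with the same exponent word on strictly
increasing variable sequences in `{1, …, n}` agree. -/
def IsQuasisym (n : ℕ+) (f : MyR) : Prop :=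
  (∀ j : ℕ+, n < j → ∀ m ∈ f.support, m j = 0) ∧
  ∀ k : ℕ, 0 < k → ∀ a : Fin k → ℕ+, ∀ u v : Fin k → ℕ+,
    StrictMono u → StrictMono v → (∀ m, u m ≤ n) → (∀ m, v m ≤ n) →
    coeff (∑ m, Finsupp.single (u m) ((a m : ℕ))) f =
      coeff (∑ m, Finsupp.single (v m) ((a m : ℕ))) f

/-- The zigzag (chain) tree encoded by a list of booleans: the internal nodes
form a chain `v₁, …, v_k` (`k` = length + 1) and the `m`-th entry records
whether `v_{m+1}` is the right child of `v_m`. -/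
def chainTree : List Bool → BTree
  | [] => BTree.node BTree.leaf BTree.leaf
  | b :: rest =>
    if b then BTree.node BTree.leaf (chainTree rest)
    else BTree.node (chainTree rest) BTree.leaf


section Stmt16Aux

lemma stmt16_pnat_le_finite (c : ℕ+) : {x : ℕ+ | x ≤ c}.Finite := by
  have : {x : ℕ+ | x ≤ c} ⊆ (fun x : ℕ+ => (x:ℕ)) ⁻¹' (Set.Iic (c:ℕ)) := fun x hx => hx
  exact Set.Finite.subset (Set.Finite.preimage
    (Set.injOn_of_injective (fun a b h => PNat.coe_injective h)) (Set.finite_Iic _)) this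

lemma stmt16_inv_finite (w : SPerm) :
    {p : ℕ+ × ℕ+ | p.1 < p.2 ∧ w.1 p.2 < w.1 p.1}.Finite := by
  set S := {x : ℕ+ | w.1 x ≠ x} with hS
  have hK : ({x : ℕ+ | ∃ s ∈ S, x ≤ s ∨ x ≤ w.1 s}).Finite := by
    have : {x : ℕ+ | ∃ s ∈ S, x ≤ s ∨ x ≤ w.1 s} ⊆
        ⋃ s ∈ S, ({x : ℕ+ | x ≤ s} ∪ {x : ℕ+ | x ≤ w.1 s}) := by
      rintro x ⟨s, hs, h⟩
      exact Set.mem_biUnion hs (by rcases h with h|h; exacts [Or.inl h, Or.inr h])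
    exact Set.Finite.subset (Set.Finite.biUnion w.2
      (fun s _ => (stmt16_pnat_le_finite s).union (stmt16_pnat_le_finite (w.1 s)))) this
  apply Set.Finite.subset (hK.prod hK)
  rintro ⟨a, b⟩ ⟨hab, hw⟩
  by_cases ha : w.1 a = a <;> by_cases hb : w.1 b = b
  · exact absurd (hw.trans_eq ha) (by rw [hb]; exact not_lt.mpr hab.le)
  · exact ⟨⟨b, hb, Or.inl hab.le⟩, ⟨b, hb, Or.inl le_rfl⟩⟩
  · exact ⟨⟨a, ha, Or.inl le_rfl⟩, ⟨a, ha, Or.inr ((hb ▸ hw).le)⟩⟩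
  · exact ⟨⟨a, ha, Or.inl le_rfl⟩, ⟨b, hb, Or.inl le_rfl⟩⟩

lemma stmt16_swap_mono {i a b : ℕ+} (hab : a < b) (hne : ¬(a = i ∧ b = i + 1)) :
    Equiv.swap i (i+1) a < Equiv.swap i (i+1) b := by
  have h1 : ∀ x y : ℕ+, x < y ↔ (x:ℕ) < (y:ℕ) := fun x y => Iff.rfl
  have h2 : ∀ x y : ℕ+, x = y ↔ (x:ℕ) = (y:ℕ) :=
    fun x y => ⟨congrArg _, fun h => PNat.coe_injective h⟩
  simp only [Equiv.swap_apply_def] at *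
  split_ifs with k1 k2 k3 k4 k5 k6 <;>
    simp only [h1, h2, PNat.add_coe, PNat.one_coe] at * <;> omega

lemma stmt16_len_lt_of_des (w : SPerm) (i : ℕ+) (h : w.1 (i+1) < w.1 i) :
    (w.mulSwap i).len < w.len := by
  set A := {p : ℕ+ × ℕ+ | p.1 < p.2 ∧ w.1 p.2 < w.1 p.1} with hA
  set A' := {p : ℕ+ × ℕ+ | p.1 < p.2 ∧ (w.mulSwap i).1 p.2 < (w.mulSwap i).1 p.1} with hA'
  have hfin : A.Finite := stmt16_inv_finite w
  have hiA : (i, i+1) ∈ A := ⟨PNat.lt_add_right i 1, h⟩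
  set e : ℕ+ × ℕ+ → ℕ+ × ℕ+ := fun p => (Equiv.swap i (i+1) p.1, Equiv.swap i (i+1) p.2) with he
  have hinj : Function.Injective e := fun p q hpq => by
    simp only [he, Prod.mk.injEq] at hpq
    exact Prod.ext ((Equiv.swap i (i+1)).injective hpq.1) ((Equiv.swap i (i+1)).injective hpq.2)
  have himg : e '' A' ⊆ A \ {(i, i+1)} := by
    rintro _ ⟨⟨a, b⟩, ⟨hab, hw⟩, rfl⟩
    have hne : ¬(a = i ∧ b = i + 1) := by
      rintro ⟨rfl, rfl⟩
      simp only [hA', Set.mem_setOf_eq, Equiv.Perm.mul_apply, SPerm.mulSwap] at hw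
      rw [Equiv.swap_apply_left, Equiv.swap_apply_right] at hw
      exact absurd h (not_lt.mpr hw.le)
    refine ⟨⟨stmt16_swap_mono hab hne, ?_⟩, ?_⟩
    · simpa only [Equiv.Perm.mul_apply, SPerm.mulSwap] using hw
    · simp only [he, Set.mem_singleton_iff, Prod.mk.injEq, not_and]
      intro h1 h2
      have ha : a = i + 1 := by
        rw [← Equiv.swap_apply_self i (i+1) a, h1, Equiv.swap_apply_left]
      have hb : b = i := by
        rw [← Equiv.swap_apply_self i (i+1) b, h2, Equiv.swap_apply_right]
      rw [ha, hb] at hab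
      exact absurd hab (not_lt.mpr (le_of_lt (PNat.lt_add_right i 1)))
  calc (w.mulSwap i).len = (e '' A').ncard := (Set.ncard_image_of_injective A' hinj).symm
    _ ≤ (A \ {(i, i+1)}).ncard := Set.ncard_le_ncard himg hfin.diff
    _ < A.ncard := Set.ncard_diff_singleton_lt_of_mem hiA hfin

lemma stmt16_mulSwap_mulSwap (w : SPerm) (i : ℕ+) : (w.mulSwap i).mulSwap i = w := by
  apply Subtype.ext
  simp [SPerm.mulSwap, mul_assoc, Equiv.swap_mul_self]

lemma stmt16_pnat_succ_sub_one (i : ℕ+) : (i + 1) - 1 = i := by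
  apply PNat.coe_injective
  rw [PNat.sub_coe]
  simp [PNat.lt_add_one_iff]

lemma stmt16_BS_comp_swap (i : ℕ+) (f : MyR) :
    BS (i+1) (rename (⇑(Equiv.swap i (i+1))) f) = BS i f := by
  have key : (BS (i+1)).comp (rename (⇑(Equiv.swap i (i+1))) : MyR →ₐ[ℤ] MyR) = BS i := by
    apply algHom_ext
    intro j
    simp only [AlgHom.comp_apply, rename_X, BS, aeval_X]
    rcases lt_trichotomy j i with hj | rfl | hj
    · rw [Equiv.swap_apply_of_ne_of_ne hj.ne (hj.trans (PNat.lt_add_right i 1)).ne]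
      rw [if_pos hj, if_pos (hj.trans (PNat.lt_add_right i 1))]
    · rw [Equiv.swap_apply_left, if_neg (lt_irrefl _), if_pos rfl, if_neg (lt_irrefl _), if_pos rfl]
    · rcases eq_or_lt_of_le (PNat.add_one_le_iff.mpr hj) with hj2 | hj2
      · rw [← hj2, Equiv.swap_apply_right, if_pos (PNat.lt_add_right i 1),
          if_neg (not_lt.mpr (le_of_lt (PNat.lt_add_right i 1))),
          if_neg (PNat.lt_add_right i 1).ne', stmt16_pnat_succ_sub_one]
      · rw [Equiv.swap_apply_of_ne_of_ne (hj.ne') (hj2.ne'),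
          if_neg (not_lt.mpr (le_of_lt hj2)), if_neg hj2.ne',
          if_neg (not_lt.mpr (le_of_lt hj)), if_neg hj.ne']
  exact DFunLike.congr_fun key f

lemma stmt16_BS_swap' (i : ℕ+) (f : MyR) :
    BS (i+1) f = BS i (rename (⇑(Equiv.swap i (i+1))) f) := by
  have := stmt16_BS_comp_swap i (rename (⇑(Equiv.swap i (i+1))) f)
  rwa [rename_rename, (by funext x; exact Equiv.swap_apply_self _ _ x :
    (⇑(Equiv.swap i (i+1)) ∘ ⇑(Equiv.swap i (i+1))) = id), rename_id] at this

end Stmt16Aux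

/-- β = 1: for a Grothendieck family `𝔊`,
if `i ∉ Des w` then `T_i 𝔊_w = 0`; if `i ∈ Des w` then
`Ĥ^L_i 𝔊_w = R_i 𝔊_w + R_i 𝔊_(w sᵢ)` and
`Ĥ^R_i 𝔊_w = R_(i+1) 𝔊_w + R_(i+1) 𝔊_(w sᵢ)`. -/

theorem stmt16 (T : ℕ+ → MyR → MyR)
    (hT : ∀ (i : ℕ+) (f : MyR), (X i : MyR) * T i f = BS (i + 1) f - BS i f)
    (D : ℕ+ → MyR → MyR)
    (hD : ∀ (i : ℕ+) (f : MyR),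
      (X i - X (i + 1)) * D i f = f - rename (⇑(Equiv.swap i (i + 1))) f)
    (G : SPerm → MyR)
    (hG1 : constantCoeff (G SPerm.one) = 1)
    (hG0 : ∀ w : SPerm, w ≠ SPerm.one → constantCoeff (G w) = 0)
    (hGdown : ∀ (w : SPerm) (i : ℕ+), (w.mulSwap i).len < w.len →
      D i ((1 + X (i + 1)) * G w) = G (w.mulSwap i))
    (hGup : ∀ (w : SPerm) (i : ℕ+), w.len < (w.mulSwap i).len →
      D i ((1 + X (i + 1)) * G w) = -G w)
    (w : SPerm) (i : ℕ+) :
    (i ∉ w.des → T i (G w) = 0) ∧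
    (i ∈ w.des →
      T i (G w) = BS i (G w) + BS i (G (w.mulSwap i)) ∧
      (1 + X i) * T i (G w) =
        BS (i + 1) (G w) + BS (i + 1) (G (w.mulSwap i))) := by
  classical
  have hXne : (X i : MyR) ≠ 0 := X_ne_zero i
  have h1X : (1 + X i : MyR) ≠ 0 := by
    intro hcon
    have := congrArg constantCoeff hcon
    simp at this
  have hwne : w.1 i ≠ w.1 (i+1) :=
    fun hcon => absurd (w.1.injective hcon) (PNat.lt_add_right i 1).ne
  have hdes_up : i ∉ w.des → w.len < (w.mulSwap i).len := by
    intro hnd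
    have h' : w.1 i < w.1 (i+1) := lt_of_le_of_ne (not_lt.mp hnd) hwne
    have hdes' : (w.mulSwap i).1 (i+1) < (w.mulSwap i).1 i := by
      show (w.1 * Equiv.swap i (i+1)) (i+1) < (w.1 * Equiv.swap i (i+1)) i
      rw [Equiv.Perm.mul_apply, Equiv.Perm.mul_apply,
        Equiv.swap_apply_left, Equiv.swap_apply_right]
      exact h'
    have := stmt16_len_lt_of_des (w.mulSwap i) i hdes'
    rwa [stmt16_mulSwap_mulSwap] at this
  have sym : ∀ f : MyR, D i ((1 + X (i+1)) * f) = -f →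
      rename (⇑(Equiv.swap i (i+1))) f = f := by
    intro f hf
    have key := hD i ((1 + X (i+1)) * f)
    rw [hf, map_mul, map_add, map_one, rename_X, Equiv.swap_apply_right] at key
    have h2 : (1 + X i) * rename (⇑(Equiv.swap i (i+1))) f = (1 + X i) * f := by
      linear_combination key
    exact mul_left_cancel₀ h1X h2
  have Tzero : ∀ f : MyR, rename (⇑(Equiv.swap i (i+1))) f = f → T i f = 0 := by
    intro f hf
    have hTf := hT i f
    rw [stmt16_BS_swap' i f, hf, sub_self] at hTf
    exact (mul_eq_zero.mp hTf).resolve_left hXne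
  constructor
  · intro hnd
    exact Tzero _ (sym _ (hGup w i (hdes_up hnd)))
  · intro hd
    have hlen : (w.mulSwap i).len < w.len := stmt16_len_lt_of_des w i hd
    have hdownEq := hGdown w i hlen
    have hupEq := hGup (w.mulSwap i) i (by rw [stmt16_mulSwap_mulSwap]; exact hlen)
    have hsymh : rename (⇑(Equiv.swap i (i+1))) (G (w.mulSwap i)) = G (w.mulSwap i) :=
      sym _ hupEq
    have hBSh : BS (i+1) (G (w.mulSwap i)) = BS i (G (w.mulSwap i)) := by
      rw [stmt16_BS_swap' i, hsymh]
    have key := hD i ((1 + X (i+1)) * G w)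
    rw [hdownEq, map_mul, map_add, map_one, rename_X, Equiv.swap_apply_right] at key
    have E := congrArg (BS (i+1)) key
    simp only [map_mul, map_sub, map_add, map_one] at E
    rw [stmt16_BS_comp_swap] at E
    have e1 : BS (i+1) (X i : MyR) = X i := by
      simp [BS, aeval_X, PNat.lt_add_right i 1]
    have e2 : BS (i+1) (X (i+1) : MyR) = 0 := by
      simp [BS, aeval_X]
    rw [e1, e2, hBSh] at E
    have hTf := hT i (G w)
    have t1 : T i (G w) = BS i (G w) + BS i (G (w.mulSwap i)) := by
      apply mul_left_cancel₀ hXne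
      rw [hTf]
      linear_combination -E
    refine ⟨t1, ?_⟩
    rw [t1]
    linear_combination E - hBSh
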